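/- Let A be a nonempty finite type, let ρ be a positive semidefinite complex matrix on ℂ^A with trace 1, and let ψ ∈ ℂ^A be a unit vector. Let H = (1/√2)·[[1,1],[1,−1]] be the Hadamard matrix on ℂ², let cSWAP be the unitary on ℂ^{2×(A×A)} fixing basis vectors indexed (0,(a,a')) and sending (1,(a,a')) to (1,(a',a)), and let C = (H ⊗ I_{A×A}) · cSWAP · (H ⊗ I_{A×A}). Let P₀ = |0⟩⟨0| be the projection onto the first basis vector of ℂ². Then trace( (P₀ ⊗ I_{A×A}) · C · (P₀ ⊗ ρ ⊗ ψψ†) · C† ) = (1 + ψ†ρψ)/2; that is, the SWAP test on input ρ and ψ outputs measurement outcome 0 with probability (1 + F²(ρ,ψ))/2 where F²(ρ,ψ) = ⟨ψ|ρ|ψ⟩. -/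

import Mathlib

open Matrix Kronecker Finset ComplexOrder

noncomputable section

theorem stmt6 {A : Type*} [Fintype A] [DecidableEq A] [Nonempty A]
    (ρ : Matrix A A ℂ) (hρ : ρ.PosSemidef) (hρtr : ρ.trace = 1)
    (ψ : A → ℂ) (hψ : ∑ a, ‖ψ a‖ ^ 2 = 1)
    (H : Matrix (Fin 2) (Fin 2) ℂ)
    (hH : H = (Real.sqrt 2)⁻¹ • !![(1 : ℂ), 1; 1, -1])
    (cSWAP : Matrix (Fin 2 × (A × A)) (Fin 2 × (A × A)) ℂ)
    (hcSWAP : cSWAP = Matrix.of fun i j =>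
      if i = (j.1, if j.1 = 0 then j.2 else (j.2.2, j.2.1)) then 1 else 0)
    (C : Matrix (Fin 2 × (A × A)) (Fin 2 × (A × A)) ℂ)
    (hC : C = (H ⊗ₖ (1 : Matrix (A × A) (A × A) ℂ)) * cSWAP
        * (H ⊗ₖ (1 : Matrix (A × A) (A × A) ℂ)))
    (P0 : Matrix (Fin 2) (Fin 2) ℂ) (hP0 : P0 = !![(1 : ℂ), 0; 0, 0])
    (ψψ : Matrix A A ℂ) (hψψ : ψψ = Matrix.of fun a a' => ψ a * star (ψ a')) :
    ((P0 ⊗ₖ (1 : Matrix (A × A) (A × A) ℂ)) * C * (P0 ⊗ₖ (ρ ⊗ₖ ψψ)) * Cᴴ).trace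
      = (1 + star ψ ⬝ᵥ (ρ *ᵥ ψ)) / 2 := by
  -- entries of C
  have hCent : ∀ (i j : Fin 2) (p q : A × A), C (i, p) (j, q)
      = H i 0 * H 0 j * (if p = q then 1 else 0)
        + H i 1 * H 1 j * (if p = (q.2, q.1) then 1 else 0) := by
    subst hcSWAP hC
    intro i j p q
    simp only [mul_apply, kroneckerMap_apply, one_apply, of_apply, Fintype.sum_prod_type,
      Fin.sum_univ_two, Prod.mk.injEq]
    simp [ite_and, mul_ite, ite_mul, Finset.sum_ite_eq, Finset.sum_ite_eq']
    simp [Prod.ext_iff, ite_and, Finset.sum_ite_eq, Finset.sum_ite_eq']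
  have h2 : (Real.sqrt 2 : ℂ)⁻¹ * (Real.sqrt 2 : ℂ)⁻¹ = 1 / 2 := by
    rw [← mul_inv]
    norm_cast
    rw [Real.mul_self_sqrt (by norm_num)]
    push_cast; norm_num
  have hkey : ∀ p q : A × A, C (0, p) (0, q)
      = (1 / 2 : ℂ) * ((if p = q then 1 else 0) + (if p = (q.2, q.1) then 1 else 0)) := by
    intro p q
    rw [hCent]
    subst hH
    simp [Matrix.smul_apply, h2]
    split_ifs <;> ring
  -- reduce the trace to a triple sum
  have htr : ((P0 ⊗ₖ (1 : Matrix (A × A) (A × A) ℂ)) * C * (P0 ⊗ₖ (ρ ⊗ₖ ψψ)) * Cᴴ).trace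
      = ∑ p : A × A, ∑ r : A × A, ∑ q : A × A,
          C (0, p) (0, q) * (ρ ⊗ₖ ψψ) q r * star (C (0, p) (0, r)) := by
    have e1 : ∀ (x z : Fin 2 × (A × A)), ((P0 ⊗ₖ (1 : Matrix (A × A) (A × A) ℂ)) * C) x z
        = if x.1 = 0 then C (0, x.2) z else 0 := by
      intro x z
      subst hP0
      simp only [mul_apply, kroneckerMap_apply, one_apply, Fintype.sum_prod_type,
        Fin.sum_univ_two, mul_ite, ite_mul, one_mul, zero_mul, mul_zero, mul_one,
        Finset.sum_ite_eq, Finset.sum_ite_eq', Finset.mem_univ, if_true]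
      obtain ⟨i, p⟩ := x
      fin_cases i <;> simp
    have e2 : ∀ (x w : Fin 2 × (A × A)),
        ((P0 ⊗ₖ (1 : Matrix (A × A) (A × A) ℂ)) * C * (P0 ⊗ₖ (ρ ⊗ₖ ψψ))) x w
        = if x.1 = 0 ∧ w.1 = 0 then
            ∑ q : A × A, C (0, x.2) (0, q) * (ρ ⊗ₖ ψψ) q w.2 else 0 := by
      intro x w
      rw [Matrix.mul_apply]
      simp only [e1, kroneckerMap_apply, Fintype.sum_prod_type, Fin.sum_univ_two]
      obtain ⟨j, r⟩ := w
      subst hP0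
      obtain ⟨i, p⟩ := x
      fin_cases i <;> fin_cases j <;> simp
    simp only [Matrix.trace, Matrix.diag, mul_apply (M := (P0 ⊗ₖ (1 : Matrix (A × A) (A × A) ℂ)) * C * (P0 ⊗ₖ (ρ ⊗ₖ ψψ))), conjTranspose_apply, e2,
      Fintype.sum_prod_type, Fin.sum_univ_two]
    simp [Finset.sum_mul]
  rw [htr]
  have hsw : ∀ p q : A × A, (p = (q.2, q.1)) ↔ ((p.2, p.1) = q) := by
    intro p q
    constructor <;> rintro rfl <;> simp
  have inner : ∀ p r : A × A, (∑ q : A × A, C (0, p) (0, q) * (ρ ⊗ₖ ψψ) q r)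
      = (1/2 : ℂ) * ((ρ ⊗ₖ ψψ) p r + (ρ ⊗ₖ ψψ) (p.2, p.1) r) := by
    intro p r
    simp only [hkey, add_mul, mul_assoc, ite_mul, one_mul, zero_mul, hsw]
    rw [← Finset.mul_sum]
    simp [Finset.sum_add_distrib, Finset.sum_ite_eq]
  have step : ∑ p : A × A, ∑ r : A × A, ∑ q : A × A,
          C (0, p) (0, q) * (ρ ⊗ₖ ψψ) q r * star (C (0, p) (0, r))
      = ∑ p : A × A, (1/4 : ℂ) * ((ρ ⊗ₖ ψψ) p p + (ρ ⊗ₖ ψψ) p (p.2, p.1)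
          + (ρ ⊗ₖ ψψ) (p.2, p.1) p + (ρ ⊗ₖ ψψ) (p.2, p.1) (p.2, p.1)) := by
    refine Finset.sum_congr rfl fun p _ => ?_
    have : ∀ r : A × A, ∑ q : A × A, C (0, p) (0, q) * (ρ ⊗ₖ ψψ) q r * star (C (0, p) (0, r))
        = ((1/2 : ℂ) * ((ρ ⊗ₖ ψψ) p r + (ρ ⊗ₖ ψψ) (p.2, p.1) r)) * star (C (0, p) (0, r)) := by
      intro r
      rw [← Finset.sum_mul, inner]
    have hkey' : ∀ r : A × A, star (C (0, p) (0, r))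
        = (1/2 : ℂ) * ((if p = r then 1 else 0) + (if p = (r.2, r.1) then 1 else 0)) := by
      intro r
      rw [hkey]
      simp [apply_ite (star : ℂ → ℂ)]
    have expand : ∀ r : A × A,
        (1/2 : ℂ) * ((ρ ⊗ₖ ψψ) p r + (ρ ⊗ₖ ψψ) (p.2, p.1) r) * star (C (0, p) (0, r))
        = (if p = r then (1/4 : ℂ) * ((ρ ⊗ₖ ψψ) p r + (ρ ⊗ₖ ψψ) (p.2, p.1) r) else 0)
          + (if (p.2, p.1) = r then
              (1/4 : ℂ) * ((ρ ⊗ₖ ψψ) p r + (ρ ⊗ₖ ψψ) (p.2, p.1) r) else 0) := by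
      intro r
      rw [hkey']
      simp only [hsw]
      split_ifs <;> ring
    simp only [this, expand, Finset.sum_add_distrib, Finset.sum_ite_eq, Finset.mem_univ,
      if_true]
    ring
  rw [step]
  have hN : ∑ a, ψ a * star (ψ a) = 1 := by
    have : ∀ a : A, ψ a * star (ψ a) = ((‖ψ a‖ ^ 2 : ℝ) : ℂ) := by
      intro a
      rw [RCLike.star_def, Complex.mul_conj, Complex.normSq_eq_norm_sq]
    rw [Finset.sum_congr rfl fun a _ => this a]
    exact_mod_cast hψ
  have hT : ∑ a, ρ a a = 1 := by simpa [Matrix.trace, Matrix.diag] using hρtr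
  have hF : star ψ ⬝ᵥ ρ *ᵥ ψ = ∑ a, ∑ b, ρ a b * (ψ b * star (ψ a)) := by
    simp only [dotProduct, mulVec, Finset.mul_sum, Pi.star_apply]
    exact Finset.sum_congr rfl fun a _ => Finset.sum_congr rfl fun b _ => by ring
  have S1 : ∑ a : A, ∑ b : A, ρ a a * (ψ b * star (ψ b)) = 1 := by
    rw [← Finset.sum_mul_sum, hT, hN, one_mul]
  have S4 : ∑ a : A, ∑ b : A, ρ b b * (ψ a * star (ψ a)) = 1 := by
    rw [Finset.sum_comm, ← Finset.sum_mul_sum, hT, hN, one_mul]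
  have S2 : ∑ a : A, ∑ b : A, ρ a b * (ψ b * star (ψ a)) = star ψ ⬝ᵥ ρ *ᵥ ψ := hF.symm
  have S3 : ∑ a : A, ∑ b : A, ρ b a * (ψ a * star (ψ b)) = star ψ ⬝ᵥ ρ *ᵥ ψ := by
    rw [Finset.sum_comm]
    exact hF.symm
  subst hψψ
  simp only [Fintype.sum_prod_type, kroneckerMap_apply, of_apply]
  simp only [mul_add, Finset.sum_add_distrib, ← Finset.mul_sum]
  rw [hN]
  simp only [mul_one]
  rw [hT, S2, S3, S4]
  ring

end
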